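/- In the setting of Popa's local quantization theorem, for each of the *-monomorphisms ρ_λ : P B(L²(A,φ)) P → A constructed there, and for every unitary u ∈ A, one has ‖[u, ρ_λ(P)]‖² ≤ ‖[P, π_φ(u)]‖² + 2‖ρ_λ(P) u ρ_λ(P) − ρ_λ(Φ(u))‖. -/

import Mathlib

open scoped ComplexOrder InnerProductSpace



lemma popa_key_ring {R : Type*} [Ring R] (p w w' : R) (hp : p * p = p) (hw : w' * w = 1) :
    p * ((w' * p - p * w') * (p * w - w * p)) * p = p - p * w' * p * w * p := by
  have hp' : ∀ x : R, x * p * p = x * p := fun x => by rw [mul_assoc, hp]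
  have hw' : ∀ x : R, x * w' * w = x := fun x => by rw [mul_assoc, hw, mul_one]
  simp only [mul_sub, sub_mul, ← mul_assoc, hp', hw', hp]
  abel

lemma popa_dec {R : Type*} [Ring R] (q f : R) (hq : q * q = q) (hf : f * f = f) :
    (q - f) * (q - f) = (q - q * f * q) + ((1 - q) * f * (1 - q)) := by
  simp only [mul_sub, sub_mul, mul_one, one_mul, ← mul_assoc, hq, hf]
  abel

lemma popa_proj_norm_le_one {R : Type*} [NonUnitalNormedRing R] [StarRing R] [CStarRing R]
    {p : R} (h1 : p * p = p) (h2 : star p = p) : ‖p‖ ≤ 1 := by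
  have h := CStarRing.norm_star_mul_self (x := p)
  rw [h2, h1] at h
  nlinarith [norm_nonneg p]

lemma popa_unit_norm_le_one {R : Type*} [NormedRing R] [StarRing R] [CStarRing R]
    {w : R} (hw : star w * w = 1) (h1 : ‖(1 : R)‖ ≤ 1) : ‖w‖ ≤ 1 := by
  have h := CStarRing.norm_star_mul_self (x := w)
  rw [hw] at h
  nlinarith [norm_nonneg w]

lemma popa_norm_pzp {R : Type*} [NonUnitalNormedRing R] {p z : R} (hp : ‖p‖ ≤ 1) :
    ‖p * z * p‖ ≤ ‖z‖ := by
  have h1 : ‖p * z * p‖ ≤ ‖p * z‖ * ‖p‖ := norm_mul_le _ _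
  have h2 : ‖p * z‖ ≤ ‖p‖ * ‖z‖ := norm_mul_le _ _
  nlinarith [norm_nonneg p, norm_nonneg z, norm_nonneg (p * z)]

section Order
variable {A : Type} [CStarAlgebra A] [PartialOrder A] [StarOrderedRing A]

lemma popa_alg_nonneg {r : ℝ} (hr : 0 ≤ r) : (0:A) ≤ algebraMap ℝ A r := by
  have h := star_mul_self_nonneg (algebraMap ℝ A (Real.sqrt r))
  rwa [← algebraMap_star_comm, star_trivial, ← map_mul, Real.mul_self_sqrt hr] at h

lemma popa_proj_nonneg {q : A} (h1 : q * q = q) (h2 : star q = q) : (0:A) ≤ q := by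
  have h := star_mul_self_nonneg q
  rwa [h2, h1] at h

lemma popa_le_smul_proj {q X : A} (hq1 : q * q = q) (_hq2 : star q = q)
    (hX : q * X * q = X) (hXsa : IsSelfAdjoint X) {M : ℝ} (hM : ‖X‖ ≤ M) :
    X ≤ M • q := by
  have h1 : X ≤ algebraMap ℝ A M := by
    refine (IsSelfAdjoint.le_algebraMap_norm_self hXsa).trans ?_
    rw [← sub_nonneg, ← map_sub]
    exact popa_alg_nonneg (by linarith)
  have h2 := star_left_conjugate_le_conjugate h1 q
  rw [_hq2, hX] at h2
  refine h2.trans_eq ?_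
  rw [Algebra.algebraMap_eq_smul_one, mul_smul_comm, mul_one, smul_mul_assoc, hq1]

end Order

/-- The (non-unital) corner `P B(H) P` of `B(H)` associated to a projection `P`. -/
def corner {H : Type} [NormedAddCommGroup H] [InnerProductSpace ℂ H] [CompleteSpace H]
    (P : H →L[ℂ] H) (h1 : IsIdempotentElem P) (h2 : IsSelfAdjoint P) :
    NonUnitalStarSubalgebra ℂ (H →L[ℂ] H) where
  carrier := {T | P * T * P = T}
  zero_mem' := by simp
  add_mem' := by
    intro a b ha hb
    simp only [Set.mem_setOf_eq] at *
    rw [mul_add, add_mul, ha, hb]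
  smul_mem' := by
    intro r a ha
    simp only [Set.mem_setOf_eq] at *
    rw [mul_smul_comm, smul_mul_assoc, ha]
  mul_mem' := by
    intro a b ha hb
    simp only [Set.mem_setOf_eq] at *
    have ha1 : a * P = a := by
      conv_lhs => rw [← ha]
      rw [show P * a * P * P = P * a * (P * P) by noncomm_ring, h1.eq, ha]
    have hb1 : P * b = b := by
      conv_lhs => rw [← hb]
      rw [show P * (P * b * P) = (P * P) * b * P by noncomm_ring, h1.eq, hb]
    rw [show P * (a * b) * P = (P * a) * (b * P) by noncomm_ring]
    have ha2 : P * a = a := by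
      conv_lhs => rw [← ha]
      rw [show P * (P * a * P) = (P * P) * a * P by noncomm_ring, h1.eq, ha]
    have hb2 : b * P = b := by
      conv_lhs => rw [← hb]
      rw [show P * b * P * P = P * b * (P * P) by noncomm_ring, h1.eq, hb]
    rw [ha2, hb2]
  star_mem' := by
    intro a ha
    simp only [Set.mem_setOf_eq] at *
    conv_lhs => rw [← ha]
    conv_rhs => rw [← ha]
    simp only [star_mul, h2.star_eq, ← mul_assoc, h1.eq]
    rw [mul_assoc, h1.eq]

set_option maxHeartbeats 1600000

/-- The commutator estimate in Popa's local quantization: for any *-monomorphism ρ of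
the corner `P B(L²(A,φ)) P` into A and any unitary u ∈ A,
`‖[u, ρ(P)]‖² ≤ ‖[P, π_φ(u)]‖² + 2‖ρ(P) u ρ(P) − ρ(Φ(u))‖`. -/
theorem popa_local_quantization_commutator_estimate
    (A : Type) [CStarAlgebra A]
    (φ : A →L[ℂ] ℂ) (hpos : ∀ a : A, 0 ≤ φ (star a * a)) (hone : φ 1 = 1)
    (hexc : ∃ (ι : Type) (l : Filter ι) (p : ι → A), l.NeBot ∧
      (∀ i : ι, IsSelfAdjoint (p i) ∧ IsIdempotentElem (p i) ∧ p i ≠ 0) ∧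
      ∀ a : A, Filter.Tendsto (fun i => ‖p i * a * p i - φ a • p i‖) l (nhds 0))
    (H : Type) [NormedAddCommGroup H] [InnerProductSpace ℂ H] [CompleteSpace H]
    (π : A →⋆ₐ[ℂ] (H →L[ℂ] H)) (ξ : H)
    (hGNS : ∀ a : A, φ a = ⟪ξ, π a ξ⟫_ℂ)
    (hcyc : Dense (Set.range fun a : A => π a ξ))
    (m : ℕ) (y : Fin m → A)
    (horth : ∀ i j : Fin m, φ (star (y j) * y i) = if i = j then 1 else 0)
    (P : H →L[ℂ] H) (hP1 : IsIdempotentElem P) (hP2 : IsSelfAdjoint P)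
    (hPrange : LinearMap.range (P : H →ₗ[ℂ] H) =
      Submodule.span ℂ (Set.range fun i : Fin m => π (y i) ξ))
    (hPmem : P ∈ corner P hP1 hP2)
    (Φ : A → ↥(corner P hP1 hP2))
    (hΦ : ∀ a : A, (Φ a : H →L[ℂ] H) = P * π a * P)
    (ρ : ↥(corner P hP1 hP2) →⋆ₙₐ[ℂ] A) (hρ : Function.Injective ρ)
    (u : A) (hu : u ∈ unitary A) :
    ‖u * ρ ⟨P, hPmem⟩ - ρ ⟨P, hPmem⟩ * u‖ ^ 2 ≤
      ‖P * π u - π u * P‖ ^ 2 +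
        2 * ‖ρ ⟨P, hPmem⟩ * u * ρ ⟨P, hPmem⟩ - ρ (Φ u)‖ := by
  -- order instances on A
  letI := CStarAlgebra.spectralOrder A
  haveI := CStarAlgebra.spectralOrderedRing A
  -- the corner is closed, hence a C*-algebra
  haveI hcl : IsClosed ((corner P hP1 hP2 : Set (H →L[ℂ] H))) := by
    show IsClosed {T : H →L[ℂ] H | P * T * P = T}
    exact isClosed_eq (by fun_prop) continuous_id
  rcases subsingleton_or_nontrivial A with hS | hN
  · have h0 : ∀ a : A, ‖a‖ = 0 := fun a => by
      rw [Subsingleton.elim a 0, norm_zero]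
    rw [h0, h0]
    norm_num
  -- main case: A nontrivial
  set q : A := ρ ⟨P, hPmem⟩ with hqdef
  set v : ↥(corner P hP1 hP2) := Φ u with hvdef
  set s : A := q * u * q with hsdef
  set C : H →L[ℂ] H := P * π u - π u * P with hCdef
  set δ : ℝ := ‖C‖ with hδdef
  set ε : ℝ := ‖s - ρ v‖ with hεdef
  set M : ℝ := δ ^ 2 + 2 * ε with hMdef
  show ‖u * q - q * u‖ ^ 2 ≤ M
  -- unitary facts
  have hu1 : star u * u = 1 := (Unitary.mem_iff.mp hu).1
  have hu2 : u * star u = 1 := (Unitary.mem_iff.mp hu).2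
  have hun : ‖u‖ ≤ 1 := popa_unit_norm_le_one hu1 norm_one.le
  -- projection facts for q
  have hxmul : (⟨P, hPmem⟩ : corner P hP1 hP2) * ⟨P, hPmem⟩ = ⟨P, hPmem⟩ :=
    Subtype.ext hP1.eq
  have hxstar : star (⟨P, hPmem⟩ : corner P hP1 hP2) = ⟨P, hPmem⟩ :=
    Subtype.ext hP2.star_eq
  have hq2 : q * q = q := by rw [hqdef, ← map_mul, hxmul]
  have hqs : star q = q := by rw [hqdef, ← map_star, hxstar]
  have hq0 : (0:A) ≤ q := popa_proj_nonneg hq2 hqs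
  have hqn : ‖q‖ ≤ 1 := popa_proj_norm_le_one hq2 hqs
  -- B(H) facts
  have hPmul : P * P = P := hP1.eq
  have hPn : ‖P‖ ≤ 1 := popa_proj_norm_le_one hP1.eq hP2.star_eq
  have hπu1 : π (star u) * π u = 1 := by rw [← map_mul, hu1, map_one]
  have hπu2 : π u * π (star u) = 1 := by rw [← map_mul, hu2, map_one]
  have hone' : ‖(1 : H →L[ℂ] H)‖ ≤ 1 := by
    rw [ContinuousLinearMap.one_def]; exact ContinuousLinearMap.norm_id_le
  have hπun : ‖π u‖ ≤ 1 := popa_unit_norm_le_one (by rw [← map_star]; exact hπu1) hone'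
  -- left-assoc rewriting helpers
  have hQl : ∀ T : A, T * q * q = T * q := fun T => by rw [mul_assoc, hq2]
  have hAl : ∀ T : A, T * u * star u = T := fun T => by rw [mul_assoc, hu2, mul_one]
  have hAl' : ∀ T : A, T * star u * u = T := fun T => by rw [mul_assoc, hu1, mul_one]
  have hPl : ∀ T : H →L[ℂ] H, T * P * P = T * P := fun T => by rw [mul_assoc, hPmul]
  -- star of C
  have hCstar : star C = π (star u) * P - P * π (star u) := by
    rw [hCdef]
    simp only [star_sub, star_mul, hP2.star_eq, ← map_star]
  -- the two key operator-norm bounds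
  have hKey1 : ‖P - P * π (star u) * P * π u * P‖ ≤ δ ^ 2 := by
    have hkey := popa_key_ring P (π u) (π (star u)) hPmul hπu1
    rw [← hkey, ← hCstar, ← hCdef]
    refine (popa_norm_pzp hPn).trans ?_
    refine (norm_mul_le _ _).trans ?_
    rw [norm_star, sq]
  have hKey2 : ‖P - P * π u * P * π (star u) * P‖ ≤ δ ^ 2 := by
    have hkey := popa_key_ring P (π (star u)) (π u) hPmul hπu2
    rw [← hkey]
    refine (popa_norm_pzp hPn).trans ?_
    refine (norm_mul_le _ _).trans ?_
    have e1 : ‖π u * P - P * π u‖ = δ := by rw [← norm_neg, neg_sub, hδdef, hCdef]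
    have e2 : ‖P * π (star u) - π (star u) * P‖ = δ := by
      rw [← norm_neg, neg_sub, ← hCstar, norm_star, hδdef]
    rw [e1, e2, sq]
  -- corner coe computations
  have hvcoe : ((v : H →L[ℂ] H)) = P * π u * P := hΦ u
  have hvscoe : ((star v : ↥(corner P hP1 hP2)) : H →L[ℂ] H) = P * π (star u) * P := by
    show star ((v : H →L[ℂ] H)) = P * π (star u) * P
    rw [hvcoe]
    simp only [star_mul, hP2.star_eq, ← map_star, ← mul_assoc]
  have hρv : ‖ρ v‖ ≤ 1 := by
    rw [NonUnitalStarAlgHom.norm_map ρ hρ]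
    show ‖(v : H →L[ℂ] H)‖ ≤ 1
    rw [hvcoe]
    exact (popa_norm_pzp hPn).trans hπun
  have hρvs : ‖star (ρ v)‖ ≤ 1 := by rw [norm_star]; exact hρv
  have hsn : ‖s‖ ≤ 1 := by
    rw [hsdef]
    refine (popa_norm_pzp hqn).trans hun
  -- star of s
  have hss : star s = q * star u * q := by
    rw [hsdef]
    simp only [star_mul, hqs, ← mul_assoc]
  -- error terms
  have hε2 : ‖ρ v - s‖ = ε := by rw [norm_sub_rev]
  have hε3 : ‖star (ρ v) - star s‖ = ε := by rw [← star_sub, norm_star, norm_sub_rev]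
  -- first corner bound
  have hcor1 : ‖ρ ((⟨P, hPmem⟩ : ↥(corner P hP1 hP2)) - star v * v)‖ ≤ δ ^ 2 := by
    rw [NonUnitalStarAlgHom.norm_map ρ hρ]
    have hco : (((⟨P, hPmem⟩ : ↥(corner P hP1 hP2)) - star v * v :
        ↥(corner P hP1 hP2)) : H →L[ℂ] H) = P - P * π (star u) * P * π u * P := by
      show P - ((star v : ↥(corner P hP1 hP2)) : H →L[ℂ] H) * (v : H →L[ℂ] H) = _
      rw [hvscoe, hvcoe]
      simp only [← mul_assoc, hPl]
    show ‖(((⟨P, hPmem⟩ : ↥(corner P hP1 hP2)) - star v * v :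
        ↥(corner P hP1 hP2)) : H →L[ℂ] H)‖ ≤ δ ^ 2
    rw [hco]
    exact hKey1
  have hcor2 : ‖ρ ((⟨P, hPmem⟩ : ↥(corner P hP1 hP2)) - v * star v)‖ ≤ δ ^ 2 := by
    rw [NonUnitalStarAlgHom.norm_map ρ hρ]
    have hco : (((⟨P, hPmem⟩ : ↥(corner P hP1 hP2)) - v * star v :
        ↥(corner P hP1 hP2)) : H →L[ℂ] H) = P - P * π u * P * π (star u) * P := by
      show P - (v : H →L[ℂ] H) * ((star v : ↥(corner P hP1 hP2)) : H →L[ℂ] H) = _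
      rw [hvscoe, hvcoe]
      simp only [← mul_assoc, hPl]
    show ‖(((⟨P, hPmem⟩ : ↥(corner P hP1 hP2)) - v * star v :
        ↥(corner P hP1 hP2)) : H →L[ℂ] H)‖ ≤ δ ^ 2
    rw [hco]
    exact hKey2
  -- the element f and decomposition
  set f : A := star u * q * u with hfdef
  have hf : f * f = f := by
    rw [hfdef]
    simp only [← mul_assoc, hAl, hAl', hQl, hq2]
  set d : A := q - f with hddef
  have hds : star d = d := by
    rw [hddef, hfdef]
    simp only [star_sub, star_mul, star_star, hqs, ← mul_assoc]
  set X : A := q - q * f * q with hXdef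
  set Y : A := (1 - q) * f * (1 - q) with hYdef
  have hdec : d * d = X + Y := popa_dec q f hq2 hf
  -- X and Y in terms of s
  have hXss : X = q - star s * s := by
    rw [hXdef, hss, hsdef, hfdef]
    simp only [← mul_assoc, hQl]
  have hYss : ‖Y‖ = ‖q - s * star s‖ := by
    have hb1 : star (q * u - q * u * q) * (q * u - q * u * q) = Y := by
      rw [hYdef, hfdef]
      simp only [star_sub, star_mul, star_star, hqs, mul_sub, sub_mul, mul_one, one_mul,
        ← mul_assoc, hQl, hq2]
    have hb2 : (q * u - q * u * q) * star (q * u - q * u * q) = q - s * star s := by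
      rw [hss, hsdef]
      simp only [star_sub, star_mul, star_star, hqs, mul_sub, sub_mul, mul_one, one_mul,
        ← mul_assoc, hQl, hq2, hAl, hAl']
      abel
    rw [← hb1, ← hb2, CStarRing.norm_star_mul_self, CStarRing.norm_self_mul_star]
  -- norm bounds on X and Y
  have hXnorm : ‖X‖ ≤ M := by
    have hXdec : X = ρ ((⟨P, hPmem⟩ : ↥(corner P hP1 hP2)) - star v * v) +
        (star (ρ v) * (ρ v - s) + (star (ρ v) - star s) * s) := by
      rw [hXss, map_sub, map_mul, map_star, ← hqdef]
      noncomm_ring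
    rw [hXdec]
    refine (norm_add_le _ _).trans ?_
    have h2 : ‖star (ρ v) * (ρ v - s) + (star (ρ v) - star s) * s‖ ≤ ε + ε := by
      refine (norm_add_le _ _).trans ?_
      have e1 : ‖star (ρ v) * (ρ v - s)‖ ≤ ε := by
        refine (norm_mul_le _ _).trans ?_
        rw [hε2]
        exact mul_le_of_le_one_left (norm_nonneg _) hρvs
      have e2 : ‖(star (ρ v) - star s) * s‖ ≤ ε := by
        refine (norm_mul_le _ _).trans ?_
        rw [hε3]
        exact mul_le_of_le_one_right (norm_nonneg _) hsn
      linarith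
    have hε0 : 0 ≤ ε := norm_nonneg _
    rw [hMdef]
    linarith [hcor1]
  have hYnorm : ‖Y‖ ≤ M := by
    have hYdec : q - s * star s = ρ ((⟨P, hPmem⟩ : ↥(corner P hP1 hP2)) - v * star v) +
        (ρ v * (star (ρ v) - star s) + (ρ v - s) * star s) := by
      rw [map_sub, map_mul, map_star, ← hqdef]
      noncomm_ring
    rw [hYss, hYdec]
    refine (norm_add_le _ _).trans ?_
    have h2 : ‖ρ v * (star (ρ v) - star s) + (ρ v - s) * star s‖ ≤ ε + ε := by
      refine (norm_add_le _ _).trans ?_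
      have e1 : ‖ρ v * (star (ρ v) - star s)‖ ≤ ε := by
        refine (norm_mul_le _ _).trans ?_
        rw [hε3]
        exact mul_le_of_le_one_left (norm_nonneg _) hρv
      have e2 : ‖(ρ v - s) * star s‖ ≤ ε := by
        refine (norm_mul_le _ _).trans ?_
        rw [hε2, norm_star]
        exact mul_le_of_le_one_right (norm_nonneg _) hsn
      linarith
    have hε0 : 0 ≤ ε := norm_nonneg _
    rw [hMdef]
    linarith [hcor2]
  -- positivity
  have h1q2 : (1 - q) * (1 - q) = 1 - q := by
    simp only [mul_sub, sub_mul, mul_one, one_mul, hq2]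
    abel
  have h1qs : star (1 - q) = 1 - q := by rw [star_sub, star_one, hqs]
  have hqle1 : q ≤ 1 := by
    have h := popa_proj_nonneg h1q2 h1qs
    exact sub_nonneg.mp h
  have hf0 : (0:A) ≤ f := by
    have h := star_left_conjugate_nonneg hq0 u
    rwa [hfdef]
  have hf1 : f ≤ 1 := by
    have h := star_left_conjugate_le_conjugate hqle1 u
    rwa [mul_one, hu1, ← hfdef] at h
  have hX0 : (0:A) ≤ X := by
    have h := star_left_conjugate_nonneg (sub_nonneg.mpr hf1) q
    rw [hqs] at h
    have e : q * (1 - f) * q = X := by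
      rw [hXdef, mul_sub, mul_one, sub_mul, hq2]
    rwa [e] at h
  have hY0 : (0:A) ≤ Y := by
    have h := star_left_conjugate_nonneg hf0 (1 - q)
    rwa [h1qs, ← hYdef] at h
  -- conjugation invariance
  have hqXq : q * X * q = X := by
    rw [hXdef]
    simp only [mul_sub, sub_mul, ← mul_assoc, hq2, hQl]
  have hqYq : (1 - q) * Y * (1 - q) = Y := by
    have h1Ql : ∀ T : A, T * (1 - q) * (1 - q) = T * (1 - q) := fun T => by
      rw [mul_assoc, h1q2]
    rw [hYdef]
    simp only [← mul_assoc, h1Ql]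
    rw [h1q2]
  -- combine
  have hXle : X ≤ M • q := popa_le_smul_proj hq2 hqs hqXq (.of_nonneg hX0) hXnorm
  have hYle : Y ≤ M • (1 - q) := popa_le_smul_proj h1q2 h1qs hqYq (.of_nonneg hY0) hYnorm
  have hsum : d * d ≤ algebraMap ℝ A M := by
    rw [hdec]
    calc X + Y ≤ M • q + M • (1 - q) := add_le_add hXle hYle
      _ = M • (1:A) := by rw [← smul_add]; norm_num
      _ = algebraMap ℝ A M := (Algebra.algebraMap_eq_smul_one M).symm
  have hdd0 : (0:A) ≤ d * d := by
    have h := star_mul_self_nonneg d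
    rwa [hds] at h
  have hM0 : 0 ≤ M := by
    rw [hMdef]
    positivity
  have hnormdd : ‖d * d‖ ≤ M := by
    refine (CStarAlgebra.norm_le_norm_of_nonneg_of_le hdd0 hsum).trans ?_
    rw [norm_algebraMap', Real.norm_eq_abs, abs_of_nonneg hM0]
  -- final assembly
  have hstep1 : ‖u * q - q * u‖ ≤ ‖d‖ := by
    have he : u * d = u * q - q * u := by
      rw [hddef, hfdef, mul_sub]
      congr 1
      rw [← mul_assoc, ← mul_assoc, hu2, one_mul]
    calc ‖u * q - q * u‖ = ‖u * d‖ := by rw [he]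
      _ ≤ ‖u‖ * ‖d‖ := norm_mul_le _ _
      _ ≤ ‖d‖ := mul_le_of_le_one_left (norm_nonneg _) hun
  have hd2 : ‖d‖ ^ 2 = ‖d * d‖ := by
    have h := CStarRing.norm_star_mul_self (x := d)
    rw [hds] at h
    rw [h, sq]
  calc ‖u * q - q * u‖ ^ 2 ≤ ‖d‖ ^ 2 := by
        exact pow_le_pow_left₀ (norm_nonneg _) hstep1 2
    _ = ‖d * d‖ := hd2
    _ ≤ M := hnormdd
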